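/- For a bounded linear operator A on a complex Hilbert space, 2‖A²‖ ≤ ‖A*A + AA*‖ ≤ ‖A²‖ + ‖A‖². -/

import Mathlib

set_option synthInstance.maxHeartbeats 1000000
set_option maxHeartbeats 1000000

open ContinuousLinearMap
open scoped ComplexInnerProductSpace

theorem stmt1 {H : Type*} [NormedAddCommGroup H] [InnerProductSpace ℂ H] [CompleteSpace H]
    (A : H →L[ℂ] H) :
    2 * ‖A * A‖ ≤ ‖adjoint A * A + A * adjoint A‖ ∧
    ‖adjoint A * A + A * adjoint A‖ ≤ ‖A * A‖ + ‖A‖ ^ 2 := by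
  have hP : (0:H→L[ℂ]H) ≤ adjoint A * A := star_mul_self_nonneg A
  have hQ : (0:H→L[ℂ]H) ≤ A * adjoint A := mul_star_self_nonneg A
  set S := CFC.sqrt (adjoint A * A) with hSdef
  set T := CFC.sqrt (A * adjoint A) with hTdef
  have hS2 : S * S = adjoint A * A := CFC.sqrt_mul_sqrt_self _ hP
  have hT2 : T * T = A * adjoint A := CFC.sqrt_mul_sqrt_self _ hQ
  have hSsa : IsSelfAdjoint S := IsSelfAdjoint.of_nonneg (CFC.sqrt_nonneg _)
  have hTsa : IsSelfAdjoint T := IsSelfAdjoint.of_nonneg (CFC.sqrt_nonneg _)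
  have hstarA : star A = adjoint A := rfl
  set N := ‖adjoint A * A + A * adjoint A‖ with hNdef
  have hN0 : 0 ≤ N := norm_nonneg _
  -- moving a self-adjoint operator across the inner product
  have hmove : ∀ (B : H→L[ℂ]H), IsSelfAdjoint B → ∀ x y : H, ⟪B x, y⟫ = ⟪x, B y⟫ := by
    intro B hB x y
    conv_lhs => rw [← hB.adjoint_eq]
    exact adjoint_inner_left B y x
  -- norm identities
  have hSnorm : ‖S‖ * ‖S‖ = ‖A‖ * ‖A‖ := by
    calc ‖S‖ * ‖S‖ = ‖star S * S‖ := (CStarRing.norm_star_mul_self).symm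
    _ = ‖adjoint A * A‖ := by rw [hSsa.star_eq, hS2]
    _ = ‖star A * A‖ := by rw [hstarA]
    _ = ‖A‖ * ‖A‖ := CStarRing.norm_star_mul_self
  have hTnorm : ‖T‖ * ‖T‖ = ‖A‖ * ‖A‖ := by
    calc ‖T‖ * ‖T‖ = ‖star T * T‖ := (CStarRing.norm_star_mul_self).symm
    _ = ‖A * adjoint A‖ := by rw [hTsa.star_eq, hT2]
    _ = ‖A * star A‖ := by rw [hstarA]
    _ = ‖A‖ * ‖A‖ := CStarRing.norm_self_mul_star
  have hSA : ‖S * A‖ = ‖A * A‖ := by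
    have h1 : ‖S * A‖ * ‖S * A‖ = ‖A * A‖ * ‖A * A‖ := by
      calc ‖S * A‖ * ‖S * A‖ = ‖star (S * A) * (S * A)‖ := (CStarRing.norm_star_mul_self).symm
      _ = ‖star (A * A) * (A * A)‖ := by
            rw [star_mul, star_mul, hSsa.star_eq, hstarA,
              show adjoint A * S * (S * A) = adjoint A * (S * S) * A by
                simp only [mul_assoc], hS2,
              show adjoint A * (adjoint A * A) * A = adjoint A * adjoint A * (A * A) by
                simp only [mul_assoc]]
      _ = ‖A * A‖ * ‖A * A‖ := CStarRing.norm_star_mul_self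
    nlinarith [norm_nonneg (S * A), norm_nonneg (A * A)]
  have hST : ‖S * T‖ = ‖A * A‖ := by
    have h1 : ‖S * T‖ * ‖S * T‖ = ‖S * A‖ * ‖S * A‖ := by
      calc ‖S * T‖ * ‖S * T‖ = ‖(S * T) * star (S * T)‖ := (CStarRing.norm_self_mul_star).symm
      _ = ‖(S * A) * star (S * A)‖ := by
            rw [star_mul, hSsa.star_eq, hTsa.star_eq, star_mul, hSsa.star_eq, hstarA,
              show S * T * (T * S) = S * (T * T) * S by simp only [mul_assoc],
              hT2, show S * (A * adjoint A) * S = S * A * (adjoint A * S) by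
                simp only [mul_assoc]]
      _ = ‖S * A‖ * ‖S * A‖ := CStarRing.norm_self_mul_star
    nlinarith [norm_nonneg (S * T), norm_nonneg (S * A), norm_nonneg (A*A), hSA]
  -- pointwise quadratic form bound
  have key0 : ∀ w : H, ‖S w‖^2 + ‖T w‖^2 ≤ N * ‖w‖^2 := by
    intro w
    have e1 : ⟪(adjoint A * A + A * adjoint A) w, w⟫ = ⟪S w, S w⟫ + ⟪T w, T w⟫ := by
      rw [← hS2, ← hT2]
      simp only [add_apply, ContinuousLinearMap.mul_apply, inner_add_left]
      rw [hmove S hSsa (S w) w, hmove T hTsa (T w) w]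
    have e2 : RCLike.re ⟪(adjoint A * A + A * adjoint A) w, w⟫ = ‖S w‖^2 + ‖T w‖^2 := by
      rw [e1, map_add, inner_self_eq_norm_sq, inner_self_eq_norm_sq]
    calc ‖S w‖^2 + ‖T w‖^2 = RCLike.re ⟪(adjoint A * A + A * adjoint A) w, w⟫ := e2.symm
    _ ≤ ‖⟪(adjoint A * A + A * adjoint A) w, w⟫‖ := RCLike.re_le_norm _
    _ ≤ ‖(adjoint A * A + A * adjoint A) w‖ * ‖w‖ := norm_inner_le_norm _ _
    _ ≤ (N * ‖w‖) * ‖w‖ := by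
          exact mul_le_mul_of_nonneg_right (le_opNorm _ w) (norm_nonneg w)
    _ = N * ‖w‖^2 := by ring
  have key1 : ∀ u v : H, ‖S u + T v‖^2 ≤ N * (‖u‖^2 + ‖v‖^2) := by
    intro u v
    set w := S u + T v with hw
    have h1 : ‖w‖^2 = RCLike.re ⟪u, S w⟫ + RCLike.re ⟪v, T w⟫ := by
      rw [← inner_self_eq_norm_sq (𝕜 := ℂ)]
      nth_rewrite 1 [hw]
      rw [inner_add_left, map_add, hmove S hSsa u w, hmove T hTsa v w]
    have h2 : RCLike.re ⟪u, S w⟫ ≤ ‖u‖ * ‖S w‖ :=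
      le_trans (RCLike.re_le_norm _) (norm_inner_le_norm _ _)
    have h3 : RCLike.re ⟪v, T w⟫ ≤ ‖v‖ * ‖T w‖ :=
      le_trans (RCLike.re_le_norm _) (norm_inner_le_norm _ _)
    have h4 : (‖u‖ * ‖S w‖ + ‖v‖ * ‖T w‖)^2 ≤ (‖u‖^2 + ‖v‖^2) * (‖S w‖^2 + ‖T w‖^2) := by
      nlinarith [sq_nonneg (‖u‖ * ‖T w‖ - ‖v‖ * ‖S w‖)]
    have h5 := key0 w
    by_cases hw0 : ‖w‖ = 0
    · rw [hw0]
      norm_num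
      exact mul_nonneg hN0 (by positivity)
    · have hwpos : 0 < ‖w‖^2 := by positivity
      have h6 : ‖w‖^2 ≤ ‖u‖ * ‖S w‖ + ‖v‖ * ‖T w‖ := by linarith
      have h7 : (‖w‖^2)^2 ≤ (‖u‖^2 + ‖v‖^2) * (N * ‖w‖^2) := by
        have h8 : (‖w‖^2)^2 ≤ (‖u‖ * ‖S w‖ + ‖v‖ * ‖T w‖)^2 := by
          have : (0:ℝ) ≤ ‖w‖^2 := le_of_lt hwpos
          nlinarith
        have h9 : (‖u‖^2 + ‖v‖^2) * (‖S w‖^2 + ‖T w‖^2) ≤ (‖u‖^2 + ‖v‖^2) * (N * ‖w‖^2) :=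
          mul_le_mul_of_nonneg_left h5 (by positivity)
        linarith
      nlinarith
  -- lower bound
  have hunit : ∀ v : H, ‖v‖ = 1 → 2 * ‖(S * T) v‖ ≤ N := by
    intro v hv
    by_cases h0 : (S * T) v = 0
    · rw [h0]; simpa using hN0
    · set w := (S * T) v with hwdef
      have hw0 : ‖w‖ ≠ 0 := norm_ne_zero_iff.mpr h0
      set u := ((‖w‖⁻¹ : ℝ) : ℂ) • w with hudef
      have hu : ‖u‖ = 1 := by
        rw [hudef, norm_smul]
        simp [norm_inv, inv_mul_cancel₀ hw0]
      have hru : RCLike.re ⟪u, w⟫ = ‖w‖ := by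
        rw [hudef, inner_smul_left, inner_self_eq_norm_sq_to_K]
        norm_cast
        simp only [Complex.coe_algebraMap, Complex.conj_ofReal, ← Complex.ofReal_mul,
          RCLike.re_to_complex, Complex.ofReal_re]
        rw [sq, ← mul_assoc, inv_mul_cancel₀ hw0, one_mul]
      have hinner : ⟪u, w⟫ = ⟪S u, T v⟫ := by
        rw [hwdef, ContinuousLinearMap.mul_apply, ← hmove S hSsa u (T v)]
      have hre : RCLike.re ⟪S u, T v⟫ = ‖w‖ := by rw [← hinner, hru]
      have hi1 : 2 * RCLike.re ⟪S u, T v⟫ ≤ ‖S u‖^2 + ‖T v‖^2 := by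
        have := le_trans (RCLike.re_le_norm ⟪S u, T v⟫) (norm_inner_le_norm (S u) (T v))
        nlinarith [sq_nonneg (‖S u‖ - ‖T v‖)]
      have hi2 : ‖S u‖^2 + ‖T v‖^2 + 2 * RCLike.re ⟪S u, T v⟫ ≤ 2 * N := by
        have hns := norm_add_sq (𝕜 := ℂ) (S u) (T v)
        have := key1 u v
        rw [hu, hv] at this
        nlinarith
      linarith [hre ▸ hi1, hre ▸ hi2]
  have hlow : ‖S * T‖ ≤ N / 2 := by
    apply opNorm_le_bound _ (by positivity)
    intro x
    rcases eq_or_ne x 0 with hx | hx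
    · simp [hx]
    · have hx0 : ‖x‖ ≠ 0 := norm_ne_zero_iff.mpr hx
      have hxpos : 0 < ‖x‖ := norm_pos_iff.mpr hx
      set v := ((‖x‖⁻¹ : ℝ) : ℂ) • x with hvdef
      have hv : ‖v‖ = 1 := by
        rw [hvdef, norm_smul]; simp [norm_inv, inv_mul_cancel₀ hx0]
      have happ : (S * T) v = ((‖x‖⁻¹ : ℝ) : ℂ) • ((S * T) x) := by
        rw [hvdef, map_smul]
      have hnv : ‖(S * T) v‖ = ‖x‖⁻¹ * ‖(S * T) x‖ := by
        rw [happ, norm_smul]; simp [norm_inv]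
      have := hunit v hv
      rw [hnv] at this
      rw [div_mul_eq_mul_div, le_div_iff₀ (by norm_num : (0:ℝ) < 2)]
      calc ‖(S * T) x‖ * 2 = (2 * (‖x‖⁻¹ * ‖(S * T) x‖)) * ‖x‖ := by
            field_simp
      _ ≤ N * ‖x‖ := mul_le_mul_of_nonneg_right this (norm_nonneg x)
  -- upper bound pieces
  have hK0 : (0:ℝ) ≤ ‖A * A‖ + ‖A‖^2 := by positivity
  have key2 : ∀ u v : H, ‖S u + T v‖^2 ≤ (‖A * A‖ + ‖A‖^2) * (‖u‖^2 + ‖v‖^2) := by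
    intro u v
    have hns := norm_add_sq (𝕜 := ℂ) (S u) (T v)
    have hcross : RCLike.re ⟪S u, T v⟫ ≤ ‖A * A‖ * (‖u‖ * ‖v‖) := by
      have h1 : ⟪S u, T v⟫ = ⟪u, (S * T) v⟫ := by
        rw [ContinuousLinearMap.mul_apply, hmove S hSsa u (T v)]
      calc RCLike.re ⟪S u, T v⟫ ≤ ‖⟪S u, T v⟫‖ := RCLike.re_le_norm _
      _ = ‖⟪u, (S * T) v⟫‖ := by rw [h1]
      _ ≤ ‖u‖ * ‖(S * T) v‖ := norm_inner_le_norm _ _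
      _ ≤ ‖u‖ * (‖S * T‖ * ‖v‖) :=
            mul_le_mul_of_nonneg_left (le_opNorm _ v) (norm_nonneg u)
      _ = ‖A * A‖ * (‖u‖ * ‖v‖) := by rw [hST]; ring
    have hSu : ‖S u‖ ≤ ‖S‖ * ‖u‖ := le_opNorm S u
    have hTv : ‖T v‖ ≤ ‖T‖ * ‖v‖ := le_opNorm T v
    nlinarith [sq_nonneg (‖u‖ - ‖v‖), norm_nonneg u, norm_nonneg v, norm_nonneg (A*A),
      norm_nonneg S, norm_nonneg T, norm_nonneg (S u), norm_nonneg (T v),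
      mul_le_mul hSu hSu (norm_nonneg _) (by positivity),
      mul_le_mul hTv hTv (norm_nonneg _) (by positivity)]
  have key3 : ∀ x : H, ‖(adjoint A * A + A * adjoint A) x‖^2
      ≤ ((‖A * A‖ + ‖A‖^2) * N) * ‖x‖^2 := by
    intro x
    have happ : (adjoint A * A + A * adjoint A) x = S (S x) + T (T x) := by
      rw [← hS2, ← hT2]; simp [add_apply, mul_apply]
    rw [happ]
    calc ‖S (S x) + T (T x)‖^2 ≤ (‖A * A‖ + ‖A‖^2) * (‖S x‖^2 + ‖T x‖^2) := key2 (S x) (T x)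
    _ ≤ (‖A * A‖ + ‖A‖^2) * (N * ‖x‖^2) := mul_le_mul_of_nonneg_left (key0 x) hK0
    _ = ((‖A * A‖ + ‖A‖^2) * N) * ‖x‖^2 := by ring
  have hupper : N ≤ ‖A * A‖ + ‖A‖^2 := by
    have hKN : (0:ℝ) ≤ (‖A * A‖ + ‖A‖^2) * N := mul_nonneg hK0 hN0
    have hb : ∀ x : H, ‖(adjoint A * A + A * adjoint A) x‖
        ≤ Real.sqrt ((‖A * A‖ + ‖A‖^2) * N) * ‖x‖ := by
      intro x
      have h := Real.sqrt_le_sqrt (key3 x)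
      rw [Real.sqrt_sq (norm_nonneg _)] at h
      calc ‖(adjoint A * A + A * adjoint A) x‖
          ≤ Real.sqrt (((‖A * A‖ + ‖A‖^2) * N) * ‖x‖^2) := h
      _ = Real.sqrt ((‖A * A‖ + ‖A‖^2) * N) * ‖x‖ := by
            rw [Real.sqrt_mul hKN, Real.sqrt_sq (norm_nonneg _)]
    have hNle : N ≤ Real.sqrt ((‖A * A‖ + ‖A‖^2) * N) :=
      opNorm_le_bound _ (Real.sqrt_nonneg _) hb
    have hsq : N^2 ≤ (‖A * A‖ + ‖A‖^2) * N := by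
      calc N^2 ≤ (Real.sqrt ((‖A * A‖ + ‖A‖^2) * N))^2 := by
            exact pow_le_pow_left₀ hN0 hNle 2
      _ = (‖A * A‖ + ‖A‖^2) * N := Real.sq_sqrt hKN
    rcases eq_or_lt_of_le hN0 with hN | hN
    · rw [← hN]; exact hK0
    · nlinarith
  constructor
  · rw [← hST]
    linarith [hlow]
  · exact hupper
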